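/- Let μ ≥ 1 be an integer, b ≥ 2 an integer, and Φ : [0,1] → ℝ₊ any nonnegative function. Then Σ_{b^{μ−1} ≤ m < b^μ} (1/m) Σ_{0 ≤ k < m} Φ(k/m) ≤ b · Σ_{1 ≤ m' < b^μ} (1/m') Σ_{0 ≤ k' < m', gcd(k',m')=1} Φ(k'/m'). -/

import Mathlib

lemma aux_partition (m : ℕ) (hm : 0 < m) (Φ : ℝ → ℝ) :
    ∑ k ∈ Finset.range m, Φ ((k : ℝ) / m)
      = ∑ d ∈ m.divisors, ∑ k' ∈ (Finset.range d).filter (fun k' => Nat.gcd k' d = 1),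
          Φ ((k' : ℝ) / d) := by
  rw [Finset.sum_sigma']
  refine Finset.sum_nbij' (fun k => ⟨m / Nat.gcd k m, k / Nat.gcd k m⟩)
    (fun p => p.2 * (m / p.1)) ?_ ?_ ?_ ?_ ?_
  · intro k hk
    simp only [Finset.mem_range] at hk
    have hg : 0 < Nat.gcd k m := Nat.gcd_pos_of_pos_right k hm
    simp only [Finset.mem_sigma, Nat.mem_divisors, Finset.mem_filter, Finset.mem_range]
    refine ⟨⟨Nat.div_dvd_of_dvd (Nat.gcd_dvd_right k m), hm.ne'⟩, ?_, ?_⟩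
    · exact Nat.div_lt_div_of_lt_of_dvd (Nat.gcd_dvd_right k m) hk
    · exact Nat.coprime_div_gcd_div_gcd hg
  · rintro ⟨d, k'⟩ hp
    simp only [Finset.mem_sigma, Nat.mem_divisors, Finset.mem_filter, Finset.mem_range] at hp
    obtain ⟨⟨hdm, hm0⟩, hk'd, hcop⟩ := hp
    simp only [Finset.mem_range]
    calc k' * (m / d) < d * (m / d) := by
          have hd0 : 0 < m / d := Nat.div_pos (Nat.le_of_dvd hm hdm) (Nat.pos_of_dvd_of_pos hdm hm)
          exact (Nat.mul_lt_mul_right hd0).2 hk'd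
      _ = m := Nat.mul_div_cancel' hdm
  · intro k hk
    have hg : 0 < Nat.gcd k m := Nat.gcd_pos_of_pos_right k hm
    simp only
    rw [Nat.div_div_self (Nat.gcd_dvd_right k m) hm.ne']
    exact Nat.div_mul_cancel (Nat.gcd_dvd_left k m)
  · rintro ⟨d, k'⟩ hp
    simp only [Finset.mem_sigma, Nat.mem_divisors, Finset.mem_filter, Finset.mem_range] at hp
    obtain ⟨⟨hdm, hm0⟩, hk'd, hcop⟩ := hp
    set e := m / d with he
    have he0 : 0 < e := Nat.div_pos (Nat.le_of_dvd hm hdm) (Nat.pos_of_dvd_of_pos hdm hm)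
    have hme : m = d * e := (Nat.mul_div_cancel' hdm).symm
    have hgcd : Nat.gcd (k' * e) m = e := by
      rw [hme, mul_comm d e, mul_comm k' e, Nat.gcd_mul_left, hcop, mul_one]
    have h1 : m / Nat.gcd (k' * e) m = d := by
      rw [hgcd, hme, mul_comm d e]; exact Nat.mul_div_cancel_left d he0
    have h2 : k' * e / Nat.gcd (k' * e) m = k' := by
      rw [hgcd]; exact Nat.mul_div_cancel k' he0
    simp only [h1, h2]
  · intro k hk
    have hg : 0 < Nat.gcd k m := Nat.gcd_pos_of_pos_right k hm
    have hdpos : 0 < m / Nat.gcd k m :=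
      Nat.div_pos (Nat.le_of_dvd hm (Nat.gcd_dvd_right k m)) hg
    simp only
    congr 1
    have h1 : k * m / Nat.gcd k m = k * (m / Nat.gcd k m) :=
      Nat.mul_div_assoc k (Nat.gcd_dvd_right k m)
    have h2 : k / Nat.gcd k m * m = k * m / Nat.gcd k m := by
      rw [mul_comm k m, Nat.mul_div_assoc m (Nat.gcd_dvd_left k m), mul_comm]
    have hnat : k * (m / Nat.gcd k m) = k / Nat.gcd k m * m := by rw [h2, h1]
    rw [div_eq_div_iff (by exact_mod_cast hm.ne' : (m:ℝ) ≠ 0)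
      (by exact_mod_cast hdpos.ne' : ((m / Nat.gcd k m : ℕ):ℝ) ≠ 0)]
    exact_mod_cast hnat

lemma aux_harm (b A d : ℕ) (hb : 2 ≤ b) (hA : 1 ≤ A) (hd : 1 ≤ d) :
    ∑ m ∈ (Finset.Ico A (A * b)).filter (fun m => d ∣ m), (1 / (m : ℝ))
      ≤ (b : ℝ) / d := by
  have hd0 : 0 < d := hd
  set j0 := (A - 1) / d + 1 with hj0
  set j1 := (A * b - 1) / d + 1 with hj1
  have hj00 : 1 ≤ j0 := Nat.le_add_left 1 _
  have hF1 : A ≤ d * j0 := by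
    have h := (Nat.div_lt_iff_lt_mul hd0).mp (Nat.lt_succ_self ((A - 1) / d))
    calc A = A - 1 + 1 := by omega
      _ ≤ ((A - 1) / d + 1) * d := h
      _ = d * j0 := by rw [hj0, mul_comm]
  have hj1b : j1 ≤ b * j0 := by
    have h : A * b - 1 < b * j0 * d := by
      calc A * b - 1 < A * b := Nat.sub_lt (Nat.mul_pos hA (by omega)) one_pos
        _ = b * A := mul_comm _ _
        _ ≤ b * (d * j0) := Nat.mul_le_mul_left b hF1
        _ = b * j0 * d := by ring
    have h2 : (A * b - 1) / d < b * j0 := (Nat.div_lt_iff_lt_mul hd0).mpr h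
    omega
  have hset : (Finset.Ico A (A * b)).filter (fun m => d ∣ m)
      = (Finset.Ico j0 j1).image (fun j => d * j) := by
    ext m
    simp only [Finset.mem_filter, Finset.mem_Ico, Finset.mem_image]
    constructor
    · rintro ⟨⟨hAm, hmB⟩, hdvd⟩
      refine ⟨m / d, ⟨?_, ?_⟩, Nat.mul_div_cancel' hdvd⟩
      · have : (A - 1) / d < m / d := by
          rw [Nat.div_lt_iff_lt_mul hd0, Nat.div_mul_cancel hdvd]
          omega
        omega
      · have : m / d ≤ (A * b - 1) / d := Nat.div_le_div_right (by omega)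
        omega
    · rintro ⟨j, ⟨hj0j, hjj1⟩, rfl⟩
      refine ⟨⟨le_trans hF1 (Nat.mul_le_mul_left d hj0j), ?_⟩, Dvd.intro j rfl⟩
      have hj : j ≤ (A * b - 1) / d := by omega
      have := (Nat.le_div_iff_mul_le hd0).mp hj
      have hab : 1 ≤ A * b := Nat.mul_pos hA (by omega)
      calc d * j = j * d := mul_comm _ _
        _ ≤ A * b - 1 := this
        _ < A * b := by omega
  rw [hset, Finset.sum_image (fun x _ y _ h => Nat.eq_of_mul_eq_mul_left hd0 h)]
  have hdj0 : 0 < d * j0 := Nat.mul_pos hd0 hj00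
  have step1 : ∑ j ∈ Finset.Ico j0 j1, (1 / ((d * j : ℕ) : ℝ))
      ≤ (Finset.Ico j0 j1).card • (1 / ((d * j0 : ℕ) : ℝ)) := by
    apply Finset.sum_le_card_nsmul
    intro j hj
    simp only [Finset.mem_Ico] at hj
    apply one_div_le_one_div_of_le
    · exact_mod_cast hdj0
    · exact_mod_cast Nat.mul_le_mul_left d hj.1
  refine le_trans step1 ?_
  rw [Nat.card_Ico, nsmul_eq_mul]
  have hcard : (j1 - j0 : ℕ) ≤ (b - 1) * j0 := by
    have : (b - 1) * j0 = b * j0 - j0 := by rw [Nat.sub_one_mul]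
    omega
  have hdR : (0 : ℝ) < d := by exact_mod_cast hd0
  have hj0R : (0 : ℝ) < j0 := by exact_mod_cast hj00
  calc ((j1 - j0 : ℕ) : ℝ) * (1 / ((d * j0 : ℕ) : ℝ))
      ≤ (((b - 1) * j0 : ℕ) : ℝ) * (1 / ((d * j0 : ℕ) : ℝ)) := by
        apply mul_le_mul_of_nonneg_right
        · exact_mod_cast hcard
        · positivity
    _ = ((b : ℝ) - 1) / d := by
        push_cast [Nat.cast_sub (show 1 ≤ b by omega)]
        field_simp
    _ ≤ (b : ℝ) / d := by
        gcongr
        linarith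

theorem stmt18 (b μ : ℕ) (hb : 2 ≤ b) (hμ : 1 ≤ μ) (Φ : ℝ → ℝ) (hΦ : ∀ x, 0 ≤ Φ x) :
    ∑ m ∈ Finset.Ico (b ^ (μ - 1)) (b ^ μ),
        (1 / (m : ℝ)) * ∑ k ∈ Finset.range m, Φ ((k : ℝ) / m)
      ≤ (b : ℝ) * ∑ m' ∈ Finset.Ico 1 (b ^ μ), (1 / (m' : ℝ)) *
          ∑ k' ∈ (Finset.range m').filter (fun k' => Nat.gcd k' m' = 1),
            Φ ((k' : ℝ) / m') := by
  set A := b ^ (μ - 1) with hA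
  have hA1 : 1 ≤ A := Nat.one_le_pow _ _ (by omega)
  have hB : b ^ μ = A * b := by
    rw [hA, ← pow_succ]
    congr 1
    omega
  set S : ℕ → ℝ := fun d =>
    ∑ k' ∈ (Finset.range d).filter (fun k' => Nat.gcd k' d = 1), Φ ((k' : ℝ) / d) with hS
  have hS0 : ∀ d, 0 ≤ S d := fun d => Finset.sum_nonneg fun _ _ => hΦ _
  calc ∑ m ∈ Finset.Ico A (b ^ μ), (1 / (m : ℝ)) * ∑ k ∈ Finset.range m, Φ ((k : ℝ) / m)
      = ∑ m ∈ Finset.Ico A (b ^ μ), ∑ d ∈ m.divisors, (1 / (m : ℝ)) * S d := by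
        apply Finset.sum_congr rfl
        intro m hm
        simp only [Finset.mem_Ico] at hm
        rw [aux_partition m (by omega) Φ, Finset.mul_sum]
    _ = ∑ d ∈ Finset.Ico 1 (b ^ μ),
          ∑ m ∈ (Finset.Ico A (b ^ μ)).filter (fun m => d ∣ m), (1 / (m : ℝ)) * S d := by
        apply Finset.sum_comm'
        intro m d
        simp only [Finset.mem_Ico, Nat.mem_divisors, Finset.mem_filter]
        constructor
        · rintro ⟨⟨h1, h2⟩, h3, h4⟩
          have hd1 : 1 ≤ d := Nat.pos_of_dvd_of_pos h3 (by omega)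
          have hdm : d ≤ m := Nat.le_of_dvd (by omega) h3
          exact ⟨⟨⟨h1, h2⟩, h3⟩, hd1, by omega⟩
        · rintro ⟨⟨⟨h1, h2⟩, h3⟩, h4, h5⟩
          exact ⟨⟨h1, h2⟩, h3, by omega⟩
    _ = ∑ d ∈ Finset.Ico 1 (b ^ μ),
          (∑ m ∈ (Finset.Ico A (b ^ μ)).filter (fun m => d ∣ m), (1 / (m : ℝ))) * S d := by
        apply Finset.sum_congr rfl
        intro d _
        rw [Finset.sum_mul]
    _ ≤ ∑ d ∈ Finset.Ico 1 (b ^ μ), ((b : ℝ) / d) * S d := by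
        apply Finset.sum_le_sum
        intro d hd
        simp only [Finset.mem_Ico] at hd
        apply mul_le_mul_of_nonneg_right _ (hS0 d)
        rw [hB]
        exact aux_harm b A d hb hA1 hd.1
    _ = (b : ℝ) * ∑ d ∈ Finset.Ico 1 (b ^ μ), (1 / (d : ℝ)) * S d := by
        rw [Finset.mul_sum]
        apply Finset.sum_congr rfl
        intro d _
        ring
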